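/- Let M be a monomial ideal in S = k[x₁,…,x_n] with lcm-lattice L_M. Then for every m ∈ L_M, the projective dimension of S/(M_{≤m}) is at most rk(m); in particular projdim(S/M) ≤ rk(L_M). -/

import Mathlib

open LinearMap

section Core
variable {R : Type*} [CommRing R]

/-- A finite free resolution of `R ⧸ J` of length at most `N`, by free modules `Fin (rnk i) → R`. -/
structure FRes (R : Type*) [CommRing R] (J : Ideal R) (N : ℕ) where
  rnk : ℕ → ℕ
  d : ∀ i, ((Fin (rnk (i+1)) → R) →ₗ[R] (Fin (rnk i) → R))
  pi : (Fin (rnk 0) → R) →ₗ[R] (R ⧸ J)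
  hlen : ∀ i, N < i → rnk i = 0
  hsurj : Function.Surjective pi
  hex0 : LinearMap.ker pi = LinearMap.range (d 0)
  hex : ∀ i, LinearMap.ker (d i) = LinearMap.range (d (i+1))

lemma submodule_eq_of_subsingleton {M : Type*} [AddCommGroup M] [Module R M] [Subsingleton M]
    (p q : Submodule R M) : p = q := by
  ext x
  rw [Subsingleton.elim x 0]
  simp

lemma linearMap_eq_of_subsingleton {M N : Type*} [AddCommGroup M] [Module R M] [Subsingleton M]
    [AddCommGroup N] [Module R N] (f g : M →ₗ[R] N) : f = g := by
  ext x
  rw [Subsingleton.elim x 0]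
  simp

def FRes.relax {J : Ideal R} {N N' : ℕ} (F : FRes R J N) (h : N ≤ N') : FRes R J N' :=
  { F with hlen := fun i hi => F.hlen i (lt_of_le_of_lt h hi) }

/-- Trivial resolution of `R ⧸ ⊤ = 0`. -/
noncomputable def resTop : FRes R (⊤ : Ideal R) 0 where
  rnk := fun _ => 0
  d := fun _ => 0
  pi := 0
  hlen := fun _ _ => rfl
  hsurj := by
    have : Subsingleton (R ⧸ (⊤ : Ideal R)) :=
      Submodule.Quotient.subsingleton_iff.2 rfl
    intro x
    exact ⟨0, Subsingleton.elim _ _⟩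
  hex0 := submodule_eq_of_subsingleton _ _
  hex := fun _ => submodule_eq_of_subsingleton _ _

/-- Length-0 resolution of `R ⧸ ⊥ = R`. -/
noncomputable def resBot : FRes R (⊥ : Ideal R) 0 where
  rnk := fun i => match i with | 0 => 1 | _+1 => 0
  d := fun _ => 0
  pi := (Submodule.mkQ (⊥ : Ideal R)).comp (LinearMap.proj (0 : Fin 1))
  hlen := fun i hi => by
    match i, hi with
    | (j+1), _ => rfl
  hsurj := by
    intro x
    obtain ⟨y, rfl⟩ := Submodule.mkQ_surjective _ x
    exact ⟨fun _ => y, rfl⟩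
  hex0 := by
    rw [LinearMap.range_zero]
    ext v
    simp only [Submodule.mem_bot, LinearMap.mem_ker, LinearMap.comp_apply,
      Submodule.mkQ_apply, Submodule.Quotient.mk_eq_zero, Submodule.mem_bot]
    constructor
    · intro h
      funext j
      rw [Subsingleton.elim j 0]
      simpa using h
    · intro h; rw [h]; rfl
  hex := fun i => submodule_eq_of_subsingleton _ _

lemma comp_eq_zero_of_exact {M₀ M₁ M₂ : Type*} [AddCommGroup M₀] [Module R M₀]
    [AddCommGroup M₁] [Module R M₁] [AddCommGroup M₂] [Module R M₂]
    {g₁ : M₁ →ₗ[R] M₀} {g₂ : M₂ →ₗ[R] M₁} (h : ker g₁ = range g₂) (x : M₂) :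
    g₁ (g₂ x) = 0 := by
  have : g₂ x ∈ ker g₁ := h ▸ LinearMap.mem_range_self _ x
  exact this

/-- lift through a map with large enough range, from a finite free module -/
lemma lift_exists {q : ℕ} {M M' : Type*} [AddCommGroup M] [Module R M]
    [AddCommGroup M'] [Module R M']
    (g : (Fin q → R) →ₗ[R] M) (h : M' →ₗ[R] M) (hr : range g ≤ range h) :
    ∃ f : (Fin q → R) →ₗ[R] M', h ∘ₗ f = g := by
  have hex : ∀ t : Fin q, ∃ y : M', h y = g (Pi.basisFun R (Fin q) t) :=
    fun t => hr (LinearMap.mem_range_self _ _)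
  refine ⟨(Pi.basisFun R (Fin q)).constr R (fun t => Classical.choose (hex t)), ?_⟩
  apply (Pi.basisFun R (Fin q)).ext
  intro t
  simp only [LinearMap.comp_apply, Module.Basis.constr_basis]
  exact Classical.choose_spec (hex t)

end Core
open LinearMap

section CM
variable {R : Type*} [CommRing R]

/-- Existence of a chain map of free resolutions lifting `φ`. -/
lemma exists_chainMap {QA QB : Type*} [AddCommGroup QA] [Module R QA]
    [AddCommGroup QB] [Module R QB]
    {rf rg : ℕ → ℕ}
    (dF : ∀ i, (Fin (rf (i+1)) → R) →ₗ[R] (Fin (rf i) → R))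
    (dG : ∀ i, (Fin (rg (i+1)) → R) →ₗ[R] (Fin (rg i) → R))
    (piA : (Fin (rg 0) → R) →ₗ[R] QA) (piB : (Fin (rf 0) → R) →ₗ[R] QB)
    (φ : QA →ₗ[R] QB)
    (hsurjB : Function.Surjective piB)
    (hexB0 : ker piB = range (dF 0))
    (hexF : ∀ i, ker (dF i) = range (dF (i+1)))
    (hexG0 : ker piA = range (dG 0))
    (hexG : ∀ i, ker (dG i) = range (dG (i+1)))
    (M : ℕ) (hlenG : ∀ i, M < i → rg i = 0) :
    ∃ f : ∀ i, (Fin (rg i) → R) →ₗ[R] (Fin (rf i) → R),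
      piB ∘ₗ f 0 = φ ∘ₗ piA ∧ ∀ i, dF i ∘ₗ f (i+1) = f i ∘ₗ dG i := by
  -- first build partial chain maps up to any level
  have key : ∀ Nlev : ℕ, ∃ f : ∀ i, (Fin (rg i) → R) →ₗ[R] (Fin (rf i) → R),
      piB ∘ₗ f 0 = φ ∘ₗ piA ∧ ∀ i < Nlev, dF i ∘ₗ f (i+1) = f i ∘ₗ dG i := by
    intro Nlev
    induction Nlev with
    | zero =>
      obtain ⟨f0, hf0⟩ := lift_exists (φ ∘ₗ piA) piB
        (by rw [LinearMap.range_eq_top.2 hsurjB]; exact le_top)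
      refine ⟨fun i => match i with | 0 => f0 | _+1 => 0, hf0, fun i hi => absurd hi (Nat.not_lt_zero i)⟩
    | succ Nl ih =>
      obtain ⟨f, hf0, hfc⟩ := ih
      have hrange : range ((f Nl) ∘ₗ (dG Nl)) ≤ range (dF Nl) := by
        rintro _ ⟨z, rfl⟩
        match Nl with
        | 0 =>
          rw [← hexB0]
          simp only [LinearMap.comp_apply, mem_ker]
          have := LinearMap.congr_fun hf0 (dG 0 z)
          simp only [LinearMap.comp_apply] at this
          rw [this]
          have : piA (dG 0 z) = 0 := comp_eq_zero_of_exact hexG0 z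
          rw [this, map_zero]
        | (j+1) =>
          rw [← hexF j]
          simp only [LinearMap.comp_apply, mem_ker]
          have := LinearMap.congr_fun (hfc j (Nat.lt_succ_self j)) (dG (j+1) z)
          simp only [LinearMap.comp_apply] at this
          rw [this]
          have h2 : dG j (dG (j+1) z) = 0 := comp_eq_zero_of_exact (hexG j) z
          rw [h2, map_zero]
      obtain ⟨fN1, hfN1⟩ := lift_exists ((f Nl) ∘ₗ (dG Nl)) (dF Nl) hrange
      classical
      refine ⟨fun i => if h : i = Nl + 1 then h ▸ fN1 else f i, ?_, ?_⟩
      · simpa using hf0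
      · intro i hi
        rcases Nat.lt_succ_iff_lt_or_eq.1 hi with hi' | rfl
        · have h1 : i ≠ Nl + 1 := by omega
          have h2 : i + 1 ≠ Nl + 1 := by omega
          simp only [dif_neg h1, dif_neg h2]
          exact hfc i hi'
        · have h1 : i ≠ i + 1 := by omega
          simp only [dif_neg h1, dif_pos rfl]
          exact hfN1
  obtain ⟨f, hf0, hfc⟩ := key (M + 2)
  refine ⟨f, hf0, fun i => ?_⟩
  by_cases hi : i < M + 2
  · exact hfc i hi
  · have hz : rg (i + 1) = 0 := hlenG (i+1) (by omega)
    have : Subsingleton (Fin (rg (i+1)) → R) := by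
      rw [hz]; infer_instance
    exact linearMap_eq_of_subsingleton _ _

end CM
open LinearMap

section Cone
variable {R : Type*} [CommRing R]

/-- conjugating an exact pair by linear equivalences -/
lemma ker_eq_range_conj {M₀ M₁ M₂ N₀ N₁ N₂ : Type*}
    [AddCommGroup M₀] [Module R M₀] [AddCommGroup M₁] [Module R M₁]
    [AddCommGroup M₂] [Module R M₂] [AddCommGroup N₀] [Module R N₀]
    [AddCommGroup N₁] [Module R N₁] [AddCommGroup N₂] [Module R N₂]
    (g₁ : M₁ →ₗ[R] M₀) (g₂ : M₂ →ₗ[R] M₁)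
    (e₀ : N₀ ≃ₗ[R] M₀) (e₁ : N₁ ≃ₗ[R] M₁) (e₂ : N₂ ≃ₗ[R] M₂)
    (h : ker g₁ = range g₂) :
    ker ((e₀.symm.toLinearMap ∘ₗ g₁) ∘ₗ e₁.toLinearMap) =
      range ((e₁.symm.toLinearMap ∘ₗ g₂) ∘ₗ e₂.toLinearMap) := by
  ext x
  simp only [mem_ker, mem_range, LinearMap.comp_apply, LinearEquiv.coe_coe]
  constructor
  · intro hx
    have h1 : g₁ (e₁ x) = 0 := by
      have := congrArg e₀ hx
      simpa using this
    have h2 : e₁ x ∈ range g₂ := h ▸ h1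
    obtain ⟨y, hy⟩ := h2
    exact ⟨e₂.symm y, by simp [hy]⟩
  · rintro ⟨z, rfl⟩
    have : g₁ (g₂ (e₂ z)) = 0 := by
      have : g₂ (e₂ z) ∈ ker g₁ := h ▸ mem_range_self _ _
      exact this
    simp [this]

lemma ker_eq_range_conj_pi {M₀ M₂ N₀ N₂ Qm : Type*}
    [AddCommGroup M₀] [Module R M₀] [AddCommGroup M₂] [Module R M₂]
    [AddCommGroup N₀] [Module R N₀] [AddCommGroup N₂] [Module R N₂]
    [AddCommGroup Qm] [Module R Qm]
    (p : M₀ →ₗ[R] Qm) (g₂ : M₂ →ₗ[R] M₀)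
    (e₀ : N₀ ≃ₗ[R] M₀) (e₂ : N₂ ≃ₗ[R] M₂)
    (h : ker p = range g₂) :
    ker (p ∘ₗ e₀.toLinearMap) = range ((e₀.symm.toLinearMap ∘ₗ g₂) ∘ₗ e₂.toLinearMap) := by
  ext x
  simp only [mem_ker, mem_range, LinearMap.comp_apply, LinearEquiv.coe_coe]
  constructor
  · intro hx
    have h2 : e₀ x ∈ range g₂ := h ▸ hx
    obtain ⟨y, hy⟩ := h2
    exact ⟨e₂.symm y, by simp [hy]⟩
  · rintro ⟨z, rfl⟩
    have : g₂ (e₂ z) ∈ ker p := h ▸ mem_range_self _ _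
    simpa using this

/-- the standard equivalence `(Fin (p+q) → R) ≃ₗ (Fin p → R) × (Fin q → R)` -/
noncomputable def finAddEquiv (p q : ℕ) :
    (Fin (p + q) → R) ≃ₗ[R] (Fin p → R) × (Fin q → R) :=
  (LinearEquiv.funCongrLeft R R finSumFinEquiv).trans
    (LinearEquiv.sumArrowLequivProdArrow _ _ R R)

/-- The mapping cone theorem: given resolutions of `R ⧸ Q` and `R ⧸ P` where
`P = (Q : w)` and `J = Q + (w)`, we get a resolution of `R ⧸ J`. -/
lemma coneRes {P Q J : Ideal R} {NF NG : ℕ}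
    (F : FRes R Q NF) (G : FRes R P NG) (w : R)
    (hPQ : ∀ x, x ∈ P ↔ w * x ∈ Q)
    (hQJ : Q ≤ J) (hJ : J = Q ⊔ Ideal.span {w}) :
    Nonempty (FRes R J (max NF (NG + 1))) := by
  classical
  -- the comparison maps between the quotients
  refine
    let φ : (R ⧸ P) →ₗ[R] (R ⧸ Q) :=
      Submodule.mapQ P Q (LinearMap.lsmul R R w)
        (fun x hx => by simpa [smul_eq_mul] using (hPQ x).1 hx);
    let ρ : (R ⧸ Q) →ₗ[R] (R ⧸ J) :=
      Submodule.mapQ Q J LinearMap.id (by simpa using hQJ);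
    ?_
  have hφ : ∀ x : R, φ (Submodule.Quotient.mk x) = Submodule.Quotient.mk (w * x) := by
    intro x
    rw [Submodule.mapQ_apply]
    simp only [LinearMap.lsmul_apply, smul_eq_mul]
  have hρ' : ∀ x : R, ρ (Submodule.Quotient.mk x) = Submodule.Quotient.mk x := by
    intro x
    rw [Submodule.mapQ_apply]
    simp only [LinearMap.id_coe, id_eq]
  have hφinj : ker φ = ⊥ := by
    rw [LinearMap.ker_eq_bot']
    intro mx hmx
    obtain ⟨x, rfl⟩ := Submodule.Quotient.mk_surjective _ mx
    rw [hφ] at hmx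
    rw [Submodule.Quotient.mk_eq_zero] at hmx ⊢
    exact (hPQ x).2 hmx
  have hρsurj : Function.Surjective ρ := by
    intro y
    obtain ⟨x, rfl⟩ := Submodule.Quotient.mk_surjective _ y
    exact ⟨Submodule.Quotient.mk x, hρ' x⟩
  have hρφ : ker ρ = range φ := by
    ext mx
    obtain ⟨x, rfl⟩ := Submodule.Quotient.mk_surjective _ mx
    simp only [mem_ker, mem_range]
    rw [hρ', Submodule.Quotient.mk_eq_zero, hJ]
    constructor
    · intro hx
      obtain ⟨qel, hq, sel, hs, rfl⟩ := Submodule.mem_sup.1 hx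
      obtain ⟨t, rfl⟩ := Submodule.mem_span_singleton.1 hs
      refine ⟨Submodule.Quotient.mk t, ?_⟩
      rw [hφ]
      rw [← sub_eq_zero, ← Submodule.Quotient.mk_sub, Submodule.Quotient.mk_eq_zero]
      have : w * t - (qel + t • w) = -qel := by ring_nf
      rw [this]
      exact neg_mem hq
    · rintro ⟨my, hy⟩
      obtain ⟨t, rfl⟩ := Submodule.Quotient.mk_surjective _ my
      rw [hφ, Submodule.Quotient.eq] at hy
      have h1 : w * t - x ∈ Q := hy
      have : x = -(w*t - x) + w * t := by ring
      rw [this]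
      exact Submodule.add_mem _ (Submodule.mem_sup_left (neg_mem h1))
        (Submodule.mem_sup_right (Submodule.mem_span_singleton.2 ⟨t, by rw [smul_eq_mul, mul_comm]⟩))
  -- chain map lifting φ
  obtain ⟨f, hf0, hfc⟩ := exists_chainMap F.d G.d G.pi F.pi φ F.hsurj F.hex0 F.hex
    G.hex0 G.hex NG G.hlen
  refine
    let pg' : ℕ → ℕ := fun i => match i with | 0 => 0 | j+1 => G.rnk j;
    let cr : ℕ → ℕ := fun i => F.rnk i + pg' i;
    let dG' : ∀ i, (Fin (pg' (i+1)) → R) →ₗ[R] (Fin (pg' i) → R) :=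
      fun i => match i with | 0 => 0 | j+1 => G.d j;
    let f' : ∀ i, (Fin (pg' (i+1)) → R) →ₗ[R] (Fin (F.rnk i) → R) := fun i => f i;
    let del : ∀ i, ((Fin (F.rnk (i+1)) → R) × (Fin (pg' (i+1)) → R)) →ₗ[R]
        ((Fin (F.rnk i) → R) × (Fin (pg' i) → R)) :=
      fun i => LinearMap.prod
        (((F.d i).comp (LinearMap.fst R _ _)) + ((f' i).comp (LinearMap.snd R _ _)))
        ((-(dG' i)).comp (LinearMap.snd R _ _));
    let piC : ((Fin (F.rnk 0) → R) × (Fin (pg' 0) → R)) →ₗ[R] (R ⧸ J) :=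
      (ρ ∘ₗ F.pi) ∘ₗ LinearMap.fst R _ _;
    ?_
  haveI hss : Subsingleton (Fin (pg' 0) → R) := inferInstanceAs (Subsingleton (Fin 0 → R))
  have hD : ∀ i (x : Fin (F.rnk (i+1)) → R) (y : Fin (pg' (i+1)) → R),
      del i (x, y) = (F.d i x + f' i y, -(dG' i y)) := fun i x y => rfl
  have hf'succ : ∀ j, f' (j+1) = f (j+1) := fun j => rfl
  have hpif : ∀ (y : Fin (G.rnk 0) → R), F.pi (f 0 y) = φ (G.pi y) :=
    fun y => LinearMap.congr_fun hf0 y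
  have hchain : ∀ i (z : Fin (G.rnk (i+1)) → R), F.d i (f (i+1) z) = f i (G.d i z) :=
    fun i z => LinearMap.congr_fun (hfc i) z
  -- Exactness at C₀
  have hC0 : ker piC = range (del 0) := by
    ext c
    obtain ⟨x, y⟩ := c
    simp only [mem_ker, mem_range]
    constructor
    · intro hx
      have hx' : F.pi x ∈ ker ρ := hx
      rw [hρφ] at hx'
      obtain ⟨ab, hab⟩ := hx'
      obtain ⟨yt, rfl⟩ := G.hsurj ab
      have h1 : x - f 0 yt ∈ ker F.pi := by
        rw [mem_ker, map_sub, hpif, hab, sub_self]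
      rw [F.hex0] at h1
      obtain ⟨x1, hx1⟩ := h1
      refine ⟨(x1, yt), ?_⟩
      rw [hD]
      have h2 : F.d 0 x1 + f' 0 yt = x := by
        show F.d 0 x1 + f 0 yt = x
        rw [hx1]; ring
      rw [h2]
      exact Prod.ext rfl (Subsingleton.elim _ _)
    · rintro ⟨⟨x1, y1⟩, hdel⟩
      rw [← hdel, hD]
      show ρ (F.pi (F.d 0 x1 + f' 0 y1)) = 0
      have e1 : F.pi (F.d 0 x1) = 0 := comp_eq_zero_of_exact F.hex0 x1
      have e2 : ρ (φ (G.pi y1)) = 0 := comp_eq_zero_of_exact hρφ (G.pi y1)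
      show ρ (F.pi (F.d 0 x1 + f 0 y1)) = 0
      rw [map_add, e1, zero_add, hpif, e2]
  -- Exactness at C₁
  have hC1 : ker (del 0) = range (del 1) := by
    ext c
    obtain ⟨x, y⟩ := c
    simp only [mem_ker, mem_range]
    constructor
    · intro hx
      rw [hD] at hx
      have h1 : F.d 0 x + f 0 y = 0 := congrArg Prod.fst hx
      have h2 : φ (G.pi y) = 0 := by
        rw [← hpif]
        have : f 0 y = -(F.d 0 x) := by
          rw [eq_neg_iff_add_eq_zero, add_comm]; exact h1
        rw [this, map_neg, comp_eq_zero_of_exact F.hex0 x, neg_zero]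
      have h3 : G.pi y = 0 := by
        have : G.pi y ∈ ker φ := h2
        rw [hφinj] at this
        simpa using this
      have h4 : y ∈ range (G.d 0) := by rw [← G.hex0]; exact h3
      obtain ⟨z0, hz0⟩ := h4
      have hzz : G.d 0 (-z0) = -y := by rw [map_neg, hz0]
      have h5 : F.d 0 (x - f 1 (-z0)) = 0 := by
        rw [map_sub, hchain 0, hzz, map_neg, sub_neg_eq_add]
        exact h1
      have h6 : x - f 1 (-z0) ∈ range (F.d 1) := by rw [← F.hex 0]; exact h5
      obtain ⟨x1, hx1⟩ := h6
      refine ⟨(x1, -z0), ?_⟩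
      rw [hD]
      refine Prod.ext ?_ ?_
      · show F.d 1 x1 + f' 1 (-z0) = x
        rw [hf'succ, hx1]; ring
      · show -(dG' 1 (-z0)) = y
        show -(G.d 0 (-z0)) = y
        rw [map_neg, neg_neg, hz0]
    · rintro ⟨⟨x1, z⟩, hdel⟩
      rw [← hdel, hD, hD]
      refine Prod.ext ?_ (Subsingleton.elim _ _)
      show F.d 0 (F.d 1 x1 + f' 1 z) + f' 0 (-(dG' 1 z)) = 0
      show F.d 0 (F.d 1 x1 + f 1 z) + f 0 (-(G.d 0 z)) = 0
      rw [map_add, comp_eq_zero_of_exact (F.hex 0) x1, zero_add, hchain 0, map_neg,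
        add_neg_cancel]
  -- Exactness at C_{i+2}
  have hCi : ∀ i, ker (del (i+1)) = range (del (i+2)) := by
    intro i
    ext c
    obtain ⟨x, y⟩ := c
    simp only [mem_ker, mem_range]
    constructor
    · intro hx
      rw [hD] at hx
      have h1 : F.d (i+1) x + f' (i+1) y = 0 := congrArg Prod.fst hx
      have h2 : -(dG' (i+1) y) = 0 := congrArg Prod.snd hx
      have h2' : G.d i y = 0 := by
        have : -(G.d i y) = 0 := h2
        simpa using this
      have h4 : y ∈ range (G.d (i+1)) := by rw [← G.hex i]; exact h2'
      obtain ⟨z0, hz0⟩ := h4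
      have hzz : G.d (i+1) (-z0) = -y := by rw [map_neg, hz0]
      have h5 : F.d (i+1) (x - f (i+2) (-z0)) = 0 := by
        rw [map_sub, hchain (i+1), hzz, map_neg, sub_neg_eq_add]
        rw [hf'succ] at h1
        exact h1
      have h6 : x - f (i+2) (-z0) ∈ range (F.d (i+2)) := by rw [← F.hex (i+1)]; exact h5
      obtain ⟨x1, hx1⟩ := h6
      refine ⟨(x1, -z0), ?_⟩
      rw [hD]
      refine Prod.ext ?_ ?_
      · show F.d (i+2) x1 + f' (i+2) (-z0) = x
        rw [hf'succ, hx1]; ring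
      · show -(dG' (i+2) (-z0)) = y
        show -(G.d (i+1) (-z0)) = y
        rw [map_neg, neg_neg, hz0]
    · rintro ⟨⟨x1, z⟩, hdel⟩
      rw [← hdel, hD, hD]
      refine Prod.ext ?_ ?_
      · show F.d (i+1) (F.d (i+2) x1 + f' (i+2) z) + f' (i+1) (-(dG' (i+2) z)) = 0
        show F.d (i+1) (F.d (i+2) x1 + f (i+2) z) + f (i+1) (-(G.d (i+1) z)) = 0
        rw [map_add, comp_eq_zero_of_exact (F.hex (i+1)) x1, zero_add, hchain (i+1),
          map_neg, add_neg_cancel]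
      · show -(dG' (i+1) (-(dG' (i+2) z))) = 0
        show -(G.d i (-(G.d (i+1) z))) = 0
        rw [map_neg, neg_neg, comp_eq_zero_of_exact (G.hex i) z]
  -- assemble, transporting along `finAddEquiv`
  refine
    let e : ∀ i, (Fin (cr i) → R) ≃ₗ[R] ((Fin (F.rnk i) → R) × (Fin (pg' i) → R)) :=
      fun i => finAddEquiv (F.rnk i) (pg' i);
    ⟨⟨cr, fun i => ((e i).symm.toLinearMap ∘ₗ del i) ∘ₗ (e (i+1)).toLinearMap,
      piC ∘ₗ (e 0).toLinearMap, ?_, ?_, ?_, ?_⟩⟩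
  · intro i hi
    match i, hi with
    | (j+1), hi =>
      have h1 : F.rnk (j+1) = 0 := F.hlen (j+1) (lt_of_le_of_lt (le_max_left _ _) hi)
      have h2 : G.rnk j = 0 := G.hlen j (by
        have := lt_of_le_of_lt (le_max_right _ _) hi
        omega)
      show F.rnk (j+1) + G.rnk j = 0
      rw [h1, h2]
  · have h1 : Function.Surjective (LinearMap.fst R (Fin (F.rnk 0) → R) (Fin (pg' 0) → R)) :=
      fun x => ⟨(x, 0), rfl⟩
    exact (hρsurj.comp F.hsurj).comp (h1.comp (e 0).surjective)
  · exact ker_eq_range_conj_pi piC (del 0) (e 0) (e 1) hC0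
  · intro i
    match i with
    | 0 => exact ker_eq_range_conj (del 0) (del 1) (e 0) (e 1) (e 2) hC1
    | (j+1) => exact ker_eq_range_conj (del (j+1)) (del (j+2)) (e (j+1)) (e (j+2)) (e (j+3)) (hCi j)

end Cone
open MvPolynomial LinearMap

section Mon
variable {k : Type*} [Field k] {n : ℕ}

/-- the monomial with exponent vector `v` -/
noncomputable def monoOf (k : Type*) [Field k] {n : ℕ} (v : Fin n → ℕ) :
    MvPolynomial (Fin n) k :=
  monomial (Finsupp.equivFunOnFinite.symm v) (1 : k)

/-- the monomial ideal spanned by the exponent vectors in `G` -/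
noncomputable def mIdeal (k : Type*) [Field k] {n : ℕ} (G : Finset (Fin n → ℕ)) :
    Ideal (MvPolynomial (Fin n) k) :=
  Ideal.span ((fun v => monoOf k v) '' ↑G)

lemma symm_le_iff (v : Fin n → ℕ) (d : Fin n →₀ ℕ) :
    Finsupp.equivFunOnFinite.symm v ≤ d ↔ ∀ j, v j ≤ d j := by
  rw [Finsupp.le_def]
  constructor <;> intro h j <;> simpa using h j

lemma mem_mIdeal_iff {G : Finset (Fin n → ℕ)} {x : MvPolynomial (Fin n) k} :
    x ∈ mIdeal k G ↔ ∀ d ∈ x.support, ∃ v ∈ G, ∀ j, v j ≤ d j := by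
  have himg : ((fun v => monoOf k v) '' (↑G : Set (Fin n → ℕ))) =
      ((fun s => monomial s (1 : k)) ''
        (⇑Finsupp.equivFunOnFinite.symm '' (↑G : Set (Fin n → ℕ)))) := by
    rw [Set.image_image]
    rfl
  rw [mIdeal, himg, mem_ideal_span_monomial_image]
  constructor
  · intro h d hd
    obtain ⟨si, hsi, hle⟩ := h d hd
    obtain ⟨v, hv, rfl⟩ := hsi
    exact ⟨v, hv, (symm_le_iff v d).1 hle⟩
  · intro h d hd
    obtain ⟨v, hv, hle⟩ := h d hd
    exact ⟨_, Set.mem_image_of_mem _ hv, (symm_le_iff v d).2 hle⟩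

lemma mIdeal_empty : mIdeal k (∅ : Finset (Fin n → ℕ)) = ⊥ := by
  simp [mIdeal]

lemma mIdeal_top_of_zero_mem {G : Finset (Fin n → ℕ)} (h : (0 : Fin n → ℕ) ∈ G) :
    mIdeal k G = ⊤ := by
  rw [Ideal.eq_top_iff_one]
  have h1 : monoOf k (0 : Fin n → ℕ) = 1 := by
    have : Finsupp.equivFunOnFinite.symm (0 : Fin n → ℕ) = 0 := by
      ext j; simp
    rw [monoOf, this, monomial_zero', C_1]
  rw [← h1]
  exact Ideal.subset_span (Set.mem_image_of_mem _ (Finset.mem_coe.2 h))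

lemma mIdeal_mono {G G' : Finset (Fin n → ℕ)} (h : G' ⊆ G) : mIdeal k G' ≤ mIdeal k G :=
  Ideal.span_mono (Set.image_mono (by exact_mod_cast h))

lemma mIdeal_insert (u : Fin n → ℕ) (G : Finset (Fin n → ℕ)) :
    mIdeal k (insert u G) = mIdeal k G ⊔ Ideal.span {monoOf k u} := by
  rw [mIdeal, Finset.coe_insert, Set.image_insert_eq, Ideal.span_insert]
  rw [sup_comm]
  rfl

/-- the colon computation: `(mIdeal G' : x^u)` is the monomial ideal of `(g ⊔ u) - u`. -/
lemma colon_iff (u : Fin n → ℕ) (G' : Finset (Fin n → ℕ)) (x : MvPolynomial (Fin n) k) :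
    x ∈ mIdeal k (G'.image (fun v => (v ⊔ u) - u)) ↔ monoOf k u * x ∈ mIdeal k G' := by
  rw [mem_mIdeal_iff, mem_mIdeal_iff]
  have hsupp : ∀ d : Fin n →₀ ℕ, d ∈ (monoOf k u * x).support ↔
      (Finsupp.equivFunOnFinite.symm u ≤ d ∧ d - Finsupp.equivFunOnFinite.symm u ∈ x.support) := by
    intro d
    rw [mem_support_iff, mem_support_iff, monoOf, coeff_monomial_mul']
    constructor
    · intro h
      by_cases hle : Finsupp.equivFunOnFinite.symm u ≤ d
      · rw [if_pos hle, one_mul] at h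
        exact ⟨hle, h⟩
      · rw [if_neg hle] at h
        exact absurd rfl h
    · rintro ⟨hle, h⟩
      rw [if_pos hle, one_mul]
      exact h
  constructor
  · intro h d hd
    rw [hsupp] at hd
    obtain ⟨hle, hd'⟩ := hd
    obtain ⟨v', hv', hle'⟩ := h _ hd'
    obtain ⟨g, hg, rfl⟩ := Finset.mem_image.1 hv'
    refine ⟨g, hg, fun j => ?_⟩
    have h1 := hle' j
    have h2 : u j ≤ d j := by
      have := (symm_le_iff u d).1 hle j
      exact this
    have h3 : (d - Finsupp.equivFunOnFinite.symm u) j = d j - u j := by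
      simp [Finsupp.coe_tsub]
    rw [h3] at h1
    have h4 : ((g ⊔ u) - u) j = max (g j) (u j) - u j := rfl
    rw [h4] at h1
    omega
  · intro h d hd
    have hd2 : (Finsupp.equivFunOnFinite.symm u + d) ∈ (monoOf k u * x).support := by
      rw [hsupp]
      constructor
      · exact le_self_add
      · rw [add_tsub_cancel_left]
        exact hd
    obtain ⟨g, hg, hle⟩ := h _ hd2
    refine ⟨(g ⊔ u) - u, Finset.mem_image_of_mem _ hg, fun j => ?_⟩
    have h1 := hle j
    have h2 : (Finsupp.equivFunOnFinite.symm u + d) j = u j + d j := by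
      simp
    rw [h2] at h1
    show max (g j) (u j) - u j ≤ d j
    omega

end Mon

section Lat
variable {n : ℕ}

/-- membership in the lcm lattice of `G` -/
def latMem (G : Finset (Fin n → ℕ)) (v : Fin n → ℕ) : Prop :=
  ∃ B ⊆ G, v = B.sup _root_.id

/-- existence of a strictly increasing chain of length `K` from `0` to `lcm G`
in the lcm lattice of `G` -/
def hasChain (G : Finset (Fin n → ℕ)) (K : ℕ) : Prop :=
  ∃ c : Fin (K + 1) → (Fin n → ℕ),
    StrictMono c ∧ (∀ j, latMem G (c j)) ∧ c 0 = 0 ∧ c (Fin.last K) = G.sup _root_.id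

lemma latMem_mono {G' G : Finset (Fin n → ℕ)} (h : G' ⊆ G) {v : Fin n → ℕ}
    (hv : latMem G' v) : latMem G v := by
  obtain ⟨B, hB, rfl⟩ := hv
  exact ⟨B, hB.trans h, rfl⟩

lemma latMem_zero (G : Finset (Fin n → ℕ)) : latMem G 0 :=
  ⟨∅, Finset.empty_subset _, by rw [Finset.sup_empty]; rfl⟩

lemma latMem_sup (G : Finset (Fin n → ℕ)) : latMem G (G.sup _root_.id) :=
  ⟨G, Finset.Subset.refl _, rfl⟩

lemma hasChain_one {G : Finset (Fin n → ℕ)} (hne : G.sup _root_.id ≠ 0) : hasChain G 1 := by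
  refine ⟨Fin.cons 0 (fun _ => G.sup _root_.id), ?_, ?_, ?_, ?_⟩
  · rw [Fin.strictMono_iff_lt_succ]
    intro i
    have h0 : Fin.castSucc i = (0 : Fin 2) := by
      rw [Subsingleton.elim i 0, Fin.castSucc_zero]
    rw [h0, Fin.cons_zero, Fin.cons_succ]
    exact zero_le.lt_of_ne (Ne.symm hne)
  · intro j
    induction j using Fin.cases with
    | zero => rw [Fin.cons_zero]; exact latMem_zero G
    | succ j0 => rw [Fin.cons_succ]; exact latMem_sup G
  · rw [Fin.cons_zero]
  · have : Fin.last 1 = Fin.succ 0 := rfl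
    rw [this, Fin.cons_succ]

lemma chains_subset_le {G' G : Finset (Fin n → ℕ)} {N : ℕ} (hsub : G' ⊆ G)
    (hN : ∀ K, hasChain G K → K ≤ N) : ∀ K, hasChain G' K → K ≤ N := by
  intro K hK
  obtain ⟨c, hmono, hmem, h0, hlast⟩ := hK
  by_cases hs : G'.sup _root_.id = G.sup _root_.id
  · exact hN K ⟨c, hmono, fun j => latMem_mono hsub (hmem j),
      h0, by rw [hlast, hs]⟩
  · have hlt : G'.sup _root_.id < G.sup _root_.id :=
      lt_of_le_of_ne (Finset.sup_mono hsub) hs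
    have hK1 : hasChain G (K + 1) := by
      refine ⟨Fin.snoc c (G.sup _root_.id), ?_, ?_, ?_, ?_⟩
      · rw [Fin.strictMono_iff_lt_succ]
        intro i
        induction i using Fin.lastCases with
        | last =>
          rw [Fin.succ_last, Fin.snoc_last, Fin.snoc_castSucc, hlast]
          exact hlt
        | cast i =>
          rw [Fin.succ_castSucc, Fin.snoc_castSucc, Fin.snoc_castSucc]
          exact hmono (Fin.castSucc_lt_succ (i := i))
      · intro j
        induction j using Fin.lastCases with
        | last => rw [Fin.snoc_last]; exact latMem_sup G
        | cast j => rw [Fin.snoc_castSucc]; exact latMem_mono hsub (hmem j)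
      · have : (0 : Fin (K+2)) = Fin.castSucc 0 := by simp
        rw [this, Fin.snoc_castSucc]
        exact h0
      · rw [Fin.snoc_last]
    have := hN (K+1) hK1
    omega

lemma sup_colon_add (u : Fin n → ℕ) (B₀ : Finset (Fin n → ℕ)) :
    B₀.sup (fun v => (v ⊔ u) - u) + u = (insert u B₀).sup _root_.id := by
  funext j
  have h1 : (B₀.sup (fun v => (v ⊔ u) - u) + u) j
      = B₀.sup (fun v => (v ⊔ u) - u) j + u j := rfl
  rw [h1, Finset.sup_apply]
  have h2 : ((insert u B₀).sup _root_.id) j = (insert u B₀).sup (fun v => _root_.id v j) :=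
    Finset.sup_apply _ _ _
  rw [h2, Finset.sup_insert]
  have h3 : ∀ v : Fin n → ℕ, ((v ⊔ u) - u) j = max (v j) (u j) - u j := fun v => rfl
  simp only [h3]
  have h4 : ∀ B : Finset (Fin n → ℕ),
      B.sup (fun v => max (v j) (u j) - u j) = (B.sup fun v => v j) - u j := by
    intro B
    induction B using Finset.induction_on with
    | empty => simp
    | @insert a s hns ih =>
      rw [Finset.sup_insert, Finset.sup_insert, ih]
      generalize (s.sup fun v => v j) = T
      clear h1 h2 h3 ih hns
      omega
  rw [h4]
  simp only [id_eq]
  generalize B₀.sup (fun v => v j) = T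
  clear h1 h2 h3 h4
  omega

lemma hasChain_colon_le {G : Finset (Fin n → ℕ)} {N : ℕ} {u : Fin n → ℕ}
    (hN : ∀ K, hasChain G K → K ≤ N) (hu : u ∈ G) (hu0 : u ≠ 0) :
    ∀ K, hasChain ((G.erase u).image (fun v => (v ⊔ u) - u)) K → K + 1 ≤ N := by
  classical
  intro K hK
  obtain ⟨c, hmono, hmem, h0, hlast⟩ := hK
  set CF := (G.erase u).image (fun v => (v ⊔ u) - u) with hCF
  -- lift a chain of the colon lattice to a chain of `G`'s lattice through `u`
  have key : ∀ j : Fin (K+1), latMem CF (c j) → latMem G (c j + u) := by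
    intro j hj
    obtain ⟨B, hB, hBv⟩ := hj
    set B₀ := (G.erase u).filter (fun v => (v ⊔ u) - u ∈ B) with hB₀
    have hBimg : B₀.image (fun v => (v ⊔ u) - u) = B := by
      apply Finset.Subset.antisymm
      · intro b hb
        obtain ⟨v, hv, rfl⟩ := Finset.mem_image.1 hb
        exact (Finset.mem_filter.1 hv).2
      · intro b hb
        obtain ⟨v, hv, rfl⟩ := Finset.mem_image.1 (hB hb)
        exact Finset.mem_image_of_mem _ (Finset.mem_filter.2 ⟨hv, hb⟩)
    refine ⟨insert u B₀, ?_, ?_⟩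
    · intro v hv
      rcases Finset.mem_insert.1 hv with rfl | hv'
      · exact hu
      · exact Finset.erase_subset _ _ (Finset.mem_filter.1 hv').1
    · have h5 : B.sup _root_.id = B₀.sup (fun v => (v ⊔ u) - u) := by
        rw [← hBimg, Finset.sup_image]
        rfl
      rw [← sup_colon_add u B₀, ← h5, hBv]
  have hchainG : hasChain G (K + 1) := by
    refine ⟨Fin.cons 0 (fun j => c j + u), ?_, ?_, ?_, ?_⟩
    · rw [Fin.strictMono_iff_lt_succ]
      intro i
      induction i using Fin.cases with
      | zero =>
        have e0 : (Fin.castSucc (0 : Fin (K+1))) = (0 : Fin (K+2)) := by simp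
        rw [e0, Fin.cons_zero, Fin.cons_succ, h0, zero_add]
        exact zero_le.lt_of_ne (Ne.symm hu0)
      | succ i0 =>
        rw [← Fin.succ_castSucc, Fin.cons_succ, Fin.cons_succ]
        exact add_lt_add_left (hmono (Fin.castSucc_lt_succ (i := i0))) u
    · intro j
      induction j using Fin.cases with
      | zero => rw [Fin.cons_zero]; exact latMem_zero G
      | succ j0 => rw [Fin.cons_succ]; exact key j0 (hmem j0)
    · rw [Fin.cons_zero]
    · have e1 : Fin.last (K+1) = Fin.succ (Fin.last K) := by
        rw [Fin.succ_last]
      rw [e1, Fin.cons_succ, hlast]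
      have h6 : CF.sup _root_.id = (G.erase u).sup (fun v => (v ⊔ u) - u) := by
        rw [hCF, Finset.sup_image]
        rfl
      rw [h6, sup_colon_add u (G.erase u), Finset.insert_erase hu]
  exact hN (K+1) hchainG

end Lat
open MvPolynomial LinearMap

section Main
variable (k : Type*) [Field k] {n : ℕ}

/-- Main induction: a monomial ideal whose lcm-lattice chains are bounded by `N`
has a free resolution of length at most `N`. -/
lemma mainRes : ∀ (s : ℕ) (G : Finset (Fin n → ℕ)), G.card ≤ s →
    ∀ N : ℕ, (∀ K, hasChain G K → K ≤ N) →
    Nonempty (FRes (MvPolynomial (Fin n) k) (mIdeal k G) N) := by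
  intro s
  induction s with
  | zero =>
    intro G hcard N _
    have : G = ∅ := Finset.card_eq_zero.1 (Nat.le_zero.1 hcard)
    subst this
    rw [mIdeal_empty]
    exact ⟨resBot.relax (Nat.zero_le N)⟩
  | succ s ih =>
    intro G hcard N hN
    by_cases h0 : (0 : Fin n → ℕ) ∈ G
    · rw [mIdeal_top_of_zero_mem h0]
      exact ⟨resTop.relax (Nat.zero_le N)⟩
    by_cases hemp : G = ∅
    · subst hemp
      rw [mIdeal_empty]
      exact ⟨resBot.relax (Nat.zero_le N)⟩
    obtain ⟨u, hu⟩ := Finset.nonempty_iff_ne_empty.2 hemp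
    have hu0 : u ≠ 0 := fun h => h0 (h ▸ hu)
    have hsupne : G.sup _root_.id ≠ 0 := by
      intro h
      have h1 : _root_.id u ≤ G.sup _root_.id := Finset.le_sup hu
      rw [h] at h1
      exact hu0 (funext fun j => Nat.le_zero.1 (h1 j))
    have hN1 : 1 ≤ N := hN 1 (hasChain_one hsupne)
    have hG'card : (G.erase u).card ≤ s := by
      rw [Finset.card_erase_of_mem hu]
      omega
    have hCFcard : ((G.erase u).image (fun v => (v ⊔ u) - u)).card ≤ s :=
      le_trans Finset.card_image_le hG'card
    have hNG' := chains_subset_le (Finset.erase_subset u G) hN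
    have hNCF : ∀ K, hasChain ((G.erase u).image (fun v => (v ⊔ u) - u)) K → K ≤ N - 1 := by
      intro K hK
      have := hasChain_colon_le hN hu hu0 K hK
      omega
    obtain ⟨F⟩ := ih (G.erase u) hG'card N hNG'
    obtain ⟨Gr⟩ := ih ((G.erase u).image (fun v => (v ⊔ u) - u)) hCFcard (N-1) hNCF
    obtain ⟨C⟩ := coneRes (J := mIdeal k G) F Gr (monoOf k u)
      (fun x => colon_iff u (G.erase u) x)
      (mIdeal_mono (Finset.erase_subset u G))
      (by rw [← mIdeal_insert, Finset.insert_erase hu])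
    exact ⟨C.relax (by omega : max N ((N-1)+1) ≤ N)⟩

end Main

/-- Let `M` be a monomial ideal of `S = k[x₁,…,x_n]` minimally
generated by monomials `x^{a 1}, …, x^{a r}` (encoded by their exponent vectors
`a : Fin r → (Fin n → ℕ)`, divisibility being the componentwise order).  The
lcm-lattice `L_M` consists of the joins (componentwise sups) of subsets of the
generators.  For `m ∈ L_M`, `(M_{≤ m})` is the ideal generated by the generators
dividing `m`, and `rk m` is the maximal length of chains from `1` (exponent `0`) to
`m` in `L_M`.  Then `projdim (S/(M_{≤ m})) ≤ rk m`: there is a free resolution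
`0 → F_{rk m} → ⋯ → F₀ → S/(M_{≤ m}) → 0` of length at most `rk m`.
(Taking `m` the top element gives `projdim (S/M) ≤ rk L_M`.) -/
theorem projdim_le_rank_lcmLattice {k : Type*} [Field k] {n r : ℕ}
    (a : Fin r → (Fin n → ℕ))
    (hmin : ∀ i j, i ≠ j → ¬ a i ≤ a j)
    (A : Finset (Fin r)) :
    let S := MvPolynomial (Fin n) k
    let m : Fin n → ℕ := A.sup a
    let L : Set (Fin n → ℕ) := {v | ∃ B : Finset (Fin r), v = B.sup a}
    let rkm : ℕ := sSup {K : ℕ | ∃ c : Fin (K + 1) → (Fin n → ℕ),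
      StrictMono c ∧ (∀ j, c j ∈ L) ∧ c 0 = 0 ∧ c (Fin.last K) = m}
    let J : Ideal S := Ideal.span
      ((fun i => monomial (Finsupp.equivFunOnFinite.symm (a i)) (1 : k)) ''
        {i : Fin r | a i ≤ m})
    ∃ (rnk : ℕ → ℕ) (D : ∀ i, Matrix (Fin (rnk i)) (Fin (rnk (i + 1))) S)
      (π : (Fin (rnk 0) → S) →ₗ[S] (S ⧸ J)),
      (∀ i, rkm < i → rnk i = 0) ∧
      Function.Surjective π ∧
      LinearMap.ker π = LinearMap.range (D 0).mulVecLin ∧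
      ∀ i, LinearMap.ker (D i).mulVecLin = LinearMap.range (D (i + 1)).mulVecLin := by
  classical
  intro S m L rkm J
  set T : Finset (Fin r) := Finset.univ.filter (fun i => a i ≤ m) with hT
  set G : Finset (Fin n → ℕ) := T.image a with hG
  -- the ideal matches
  have hJ : J = mIdeal k G := by
    show Ideal.span ((fun i => monomial (Finsupp.equivFunOnFinite.symm (a i)) (1 : k)) ''
        {i : Fin r | a i ≤ m}) = mIdeal k G
    rw [mIdeal, hG, Finset.coe_image]
    have hTset : (↑T : Set (Fin r)) = {i : Fin r | a i ≤ m} := by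
      ext i
      simp [hT]
    rw [← Set.image_comp, hTset]
    rfl
  -- sup over G is m
  have hsup : G.sup _root_.id = m := by
    rw [hG, Finset.sup_image]
    apply le_antisymm
    · apply Finset.sup_le
      intro i hi
      exact (Finset.mem_filter.1 hi).2
    · apply Finset.sup_le
      intro i hiA
      have h1 : a i ≤ m := Finset.le_sup hiA
      have h2 : i ∈ T := Finset.mem_filter.2 ⟨Finset.mem_univ i, h1⟩
      exact Finset.le_sup (f := _root_.id ∘ a) h2
  -- chain bound: every chain of `G`'s lcm lattice has length at most rkm
  have hbd : ∀ K, hasChain G K → K ≤ rkm := by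
    intro K hK
    obtain ⟨c, hmono, hmem, h0, hlast⟩ := hK
    have hmemset : K ∈ {K : ℕ | ∃ c : Fin (K + 1) → (Fin n → ℕ),
        StrictMono c ∧ (∀ j, c j ∈ L) ∧ c 0 = 0 ∧ c (Fin.last K) = m} := by
      refine ⟨c, hmono, ?_, h0, by rw [hlast, hsup]⟩
      intro j
      obtain ⟨B, hB, hBv⟩ := hmem j
      have hBimg : (T.filter (fun i => a i ∈ B)).image a = B := by
        apply Finset.Subset.antisymm
        · intro b hb
          obtain ⟨i, hi, rfl⟩ := Finset.mem_image.1 hb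
          exact (Finset.mem_filter.1 hi).2
        · intro b hb
          have hb' : b ∈ T.image a := by rw [← hG]; exact hB hb
          obtain ⟨i, hi, rfl⟩ := Finset.mem_image.1 hb'
          exact Finset.mem_image_of_mem _ (Finset.mem_filter.2 ⟨hi, hb⟩)
      refine ⟨T.filter (fun i => a i ∈ B), ?_⟩
      have heq : (T.filter (fun i => a i ∈ B)).sup a = B.sup _root_.id := by
        conv_rhs => rw [← hBimg]
        rw [Finset.sup_image]
        rfl
      rw [hBv, heq]
    -- rkm is the sSup of a bounded set
    have hbdd : BddAbove {K : ℕ | ∃ c : Fin (K + 1) → (Fin n → ℕ),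
        StrictMono c ∧ (∀ j, c j ∈ L) ∧ c 0 = 0 ∧ c (Fin.last K) = m} := by
      refine ⟨∑ t, m t, ?_⟩
      rintro K' ⟨c', hmono', hmem', h0', hlast'⟩
      have hdeg : StrictMono (fun j : Fin (K'+1) => ∑ t, c' j t) := by
        intro j1 j2 hj
        have hlt := hmono' hj
        rw [Pi.lt_def] at hlt
        obtain ⟨hle, t0, ht0⟩ := hlt
        exact Finset.sum_lt_sum (fun t _ => hle t) ⟨t0, Finset.mem_univ t0, ht0⟩
      have hinj : Function.Injective (fun j : Fin (K'+1) => ∑ t, c' j t) := hdeg.injective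
      have hsub : Finset.univ.image (fun j : Fin (K'+1) => ∑ t, c' j t)
          ⊆ Finset.range (∑ t, m t + 1) := by
        intro x hx
        obtain ⟨j, _, rfl⟩ := Finset.mem_image.1 hx
        rw [Finset.mem_range]
        have hle : c' j ≤ m := by
          have := (hmono'.monotone (Fin.le_last j))
          rw [hlast'] at this
          exact this
        have := Finset.sum_le_sum (fun t (_ : t ∈ Finset.univ) => hle t)
        omega
      have hcard := Finset.card_le_card hsub
      rw [Finset.card_image_of_injective _ hinj, Finset.card_range, Finset.card_univ,
        Fintype.card_fin] at hcard
      omega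
    exact le_csSup hbdd hmemset
  obtain ⟨F⟩ := mainRes k G.card G le_rfl rkm hbd
  rw [hJ]
  refine ⟨F.rnk, fun i => LinearMap.toMatrix' (F.d i), F.pi, F.hlen, F.hsurj, ?_, ?_⟩
  · rw [← Matrix.toLin'_apply', Matrix.toLin'_toMatrix']
    exact F.hex0
  · intro i
    rw [← Matrix.toLin'_apply', ← Matrix.toLin'_apply', Matrix.toLin'_toMatrix',
      Matrix.toLin'_toMatrix']
    exact F.hex i
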